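/- Let K_4 = C_2 × C_2 be the Klein four group with non-identity elements a, b, c (so ab = c), and let H_a = ⟨a⟩, H_b = ⟨b⟩, H_c = ⟨c⟩, each cyclic of order 2. Let p : H_a ∗ H_b ∗ H_c → K_4 be the homomorphism from the free product induced by the inclusions. Then p is surjective, its kernel is the normal closure in H_a ∗ H_b ∗ H_c of the single element ι_a(a)·ι_b(b)·ι_c(c), and Ker p is a free group of rank 3. -/

import Mathlib

/-- The Klein four group `K₄ = C₂ × C₂`. -/
abbrev KleinFour : Type := Multiplicative (ZMod 2 × ZMod 2)

/-- The three non-identity elements `a`, `b`, `c` of the Klein four group (so `a * b = c`). -/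
def kGen : Fin 3 → KleinFour :=
  ![Multiplicative.ofAdd (1, 0), Multiplicative.ofAdd (0, 1), Multiplicative.ofAdd (1, 1)]

/-- The subgroups `H_a = ⟨a⟩`, `H_b = ⟨b⟩`, `H_c = ⟨c⟩` (each cyclic of order 2). -/
def kH (m : Fin 3) : Subgroup KleinFour := Subgroup.zpowers (kGen m)

/-- The homomorphism `p : H_a ∗ H_b ∗ H_c → K₄` from the free product induced by the
inclusions. -/
def pK4 : Monoid.CoprodI (fun m : Fin 3 => kH m) →* KleinFour :=
  Monoid.CoprodI.lift fun m => (kH m).subtype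

/-! ### Auxiliary constructions -/

namespace KleinAux

local notation "F3" => FreeGroup (Fin 3)
local notation "G" => Monoid.CoprodI (fun m : Fin 3 => kH m)

def u : F3 := FreeGroup.of 0
def v : F3 := FreeGroup.of 1
def w : F3 := FreeGroup.of 2

/-- The twisted action of `K₄` on the free group, on generators. -/
def phiW : KleinFour → Fin 3 → F3 := fun s =>
  if s = kGen 0 then ![w⁻¹, v⁻¹, u⁻¹]
  else if s = kGen 1 then ![v⁻¹ * w, v⁻¹, v⁻¹ * u]
  else if s = kGen 2 then ![v * u⁻¹, v, v * w⁻¹]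
  else ![u, v, w]

def phi (s : KleinFour) : F3 →* F3 := FreeGroup.lift (phiW s)

/-- The `2`-cocycle. -/
def fE : KleinFour → KleinFour → F3 := fun s t =>
  if s = kGen 1 ∧ (t = kGen 0 ∨ t = kGen 2) then v⁻¹
  else if s = kGen 2 ∧ (t = kGen 0 ∨ t = kGen 2) then v
  else 1

lemma kelim : ∀ s : KleinFour, s = 1 ∨ s = kGen 0 ∨ s = kGen 1 ∨ s = kGen 2 := by decide

lemma phi_one : ∀ n, phi 1 n = n := by
  have h : phi 1 = MonoidHom.id F3 := by
    apply FreeGroup.ext_hom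
    intro i; fin_cases i <;> simp +decide [phi, phiW, u, v, w]
  simp [h]

lemma fE_one_left : ∀ t, fE 1 t = 1 := by
  intro t; rcases kelim t with rfl|rfl|rfl|rfl <;> simp +decide [fE]

lemma fE_one_right : ∀ s, fE s 1 = 1 := by
  intro s; rcases kelim s with rfl|rfl|rfl|rfl <;> simp +decide [fE]

set_option maxHeartbeats 1000000 in
lemma hcompW : ∀ (s t : KleinFour) (i : Fin 3),
    phi s (phi t (FreeGroup.of i)) = fE s t * phi (s * t) (FreeGroup.of i) * (fE s t)⁻¹ := by
  intro s t i
  rcases kelim s with rfl|rfl|rfl|rfl <;> rcases kelim t with rfl|rfl|rfl|rfl <;>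
    fin_cases i <;>
    simp +decide [phi, phiW, fE, u, v, w]

lemma hcomp (s t : KleinFour) (n : F3) :
    phi s (phi t n) = fE s t * phi (s * t) n * (fE s t)⁻¹ := by
  have h : (phi s).comp (phi t)
      = ((MulAut.conj (fE s t)).toMonoidHom.comp (phi (s * t))) := by
    apply FreeGroup.ext_hom
    intro i
    simpa using hcompW s t i
  have := congrArg (fun f : F3 →* F3 => f n) h
  simpa using this

set_option maxHeartbeats 1000000 in
lemma hcoc : ∀ s t r : KleinFour,
    phi s (fE t r) * fE s (t * r) = fE s t * fE (s * t) r := by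
  intro s t r
  rcases kelim s with rfl|rfl|rfl|rfl <;> rcases kelim t with rfl|rfl|rfl|rfl <;>
    rcases kelim r with rfl|rfl|rfl|rfl <;>
    simp +decide [phi, phiW, fE, u, v, w]

/-- The extension `E` of `K₄` by the free group of rank 3. -/
structure E where
  n : F3
  s : KleinFour

instance : Mul E := ⟨fun e e' => ⟨e.n * phi e.s e'.n * fE e.s e'.s, e.s * e'.s⟩⟩
instance : One E := ⟨⟨1, 1⟩⟩
instance : Inv E := ⟨fun e => ⟨(phi e.s e.n * fE e.s e.s)⁻¹, e.s⁻¹⟩⟩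

lemma mul_def (a b : E) : a * b = ⟨a.n * phi a.s b.n * fE a.s b.s, a.s * b.s⟩ := rfl
lemma one_def : (1 : E) = ⟨1, 1⟩ := rfl
lemma inv_def (a : E) : a⁻¹ = ⟨(phi a.s a.n * fE a.s a.s)⁻¹, a.s⁻¹⟩ := rfl

lemma ks_inv : ∀ s : KleinFour, s⁻¹ = s := by decide
lemma ks_sq : ∀ s : KleinFour, s * s = 1 := by decide

instance : Group E := by
  apply Group.ofLeftAxioms
  · rintro ⟨n1, s1⟩ ⟨n2, s2⟩ ⟨n3, s3⟩
    simp only [mul_def, E.mk.injEq, mul_assoc, map_mul]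
    refine ⟨?_, trivial⟩
    congr 1
    rw [hcomp s1 s2 n3]
    simp only [mul_assoc, inv_mul_cancel_left]
    congr 1
    congr 1
    congr 1
    rw [eq_inv_mul_iff_mul_eq]
    exact (hcoc s1 s2 s3).symm
  · rintro ⟨n, s⟩
    simp [mul_def, one_def, phi_one, fE_one_left]
  · rintro ⟨n, s⟩
    simp only [mul_def, inv_def, one_def, E.mk.injEq, ks_inv]
    exact ⟨by group, ks_sq s⟩

end KleinAux

namespace KleinAux

local notation "F3" => FreeGroup (Fin 3)
local notation "G" => Monoid.CoprodI (fun m : Fin 3 => kH m)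

/-- The canonical generators of the free product. -/
def gg (m : Fin 3) : G :=
  Monoid.CoprodI.of (M := fun m : Fin 3 => kH m) (i := m) ⟨kGen m, Subgroup.mem_zpowers _⟩

lemma kgen_sq : ∀ m : Fin 3, kGen m * kGen m = 1 := by decide
lemma kgen_ne : ∀ m : Fin 3, kGen m ≠ (1 : KleinFour) := by decide

lemma gsq (m : Fin 3) : gg m * gg m = 1 := by
  rw [gg, ← map_mul]
  have h : (⟨kGen m, Subgroup.mem_zpowers _⟩ * ⟨kGen m, Subgroup.mem_zpowers _⟩ : kH m) = 1 :=
    Subtype.ext (kgen_sq m)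
  rw [h, map_one]

lemma ginv (m : Fin 3) : (gg m)⁻¹ = gg m :=
  inv_eq_of_mul_eq_one_right (gsq m)

lemma gg_cancel (m : Fin 3) (t : G) : gg m * (gg m * t) = t := by
  rw [← mul_assoc, gsq, one_mul]

/-- The Schreier transversal. -/
def sigma : KleinFour → G := fun s =>
  if s = kGen 0 then gg 0
  else if s = kGen 1 then gg 1
  else if s = kGen 2 then gg 0 * gg 1
  else 1

/-- The embedding of the free group onto the kernel. -/
def j : F3 →* G := FreeGroup.lift ![gg 0 * gg 1 * gg 2, gg 0 * gg 1 * gg 0 * gg 1, gg 0 * gg 2 * gg 1]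

set_option maxHeartbeats 1000000 in
lemma K1W : ∀ (s : KleinFour) (i : Fin 3),
    j (phi s (FreeGroup.of i)) = sigma s * j (FreeGroup.of i) * (sigma s)⁻¹ := by
  intro s i
  rcases kelim s with rfl|rfl|rfl|rfl <;> fin_cases i <;>
    simp +decide [j, sigma, phi, phiW, u, v, w, mul_inv_rev, ginv, mul_assoc, gg_cancel]

lemma K1 (s : KleinFour) (n : F3) : j (phi s n) = sigma s * j n * (sigma s)⁻¹ := by
  have h : j.comp (phi s) = (MulAut.conj (sigma s)).toMonoidHom.comp j := by
    apply FreeGroup.ext_hom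
    intro i
    simpa [mul_assoc] using K1W s i
  have := congrArg (fun f : F3 →* G => f n) h
  simpa [mul_assoc] using this

set_option maxHeartbeats 1000000 in
lemma K2 : ∀ s t : KleinFour, j (fE s t) * sigma (s * t) = sigma s * sigma t := by
  intro s t
  rcases kelim s with rfl|rfl|rfl|rfl <;> rcases kelim t with rfl|rfl|rfl|rfl <;>
    simp +decide [j, sigma, fE, u, v, w, mul_inv_rev, ginv, mul_assoc, gg_cancel]

/-- Images in `E` of the three canonical generators of the free product. -/
def tau : Fin 3 → E := ![⟨1, kGen 0⟩, ⟨1, kGen 1⟩, ⟨u⁻¹, kGen 2⟩]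

lemma tau_s : ∀ m : Fin 3, (tau m).s = kGen m := by intro m; fin_cases m <;> rfl

lemma link : ∀ m : Fin 3, j (tau m).n * sigma (kGen m) = gg m := by
  intro m
  fin_cases m <;>
    simp +decide [j, sigma, tau, u, mul_inv_rev, ginv, mul_assoc, gg_cancel]

end KleinAux

namespace KleinAux

local notation "F3" => FreeGroup (Fin 3)
local notation "G" => Monoid.CoprodI (fun m : Fin 3 => kH m)

lemma kgen_zpow (m : Fin 3) : ∀ k : ℤ, kGen m ^ k = 1 ∨ kGen m ^ k = kGen m := by
  intro k
  have h2 : kGen m ^ (2 : ℤ) = 1 := by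
    rw [zpow_two, kgen_sq]
  have hk : kGen m ^ k = kGen m ^ (k % 2) := by
    conv_lhs => rw [← Int.mul_ediv_add_emod k 2]
    rw [zpow_add, zpow_mul, h2, one_zpow, one_mul]
  rcases Int.emod_two_eq k with h | h
  · left; rw [hk, h, zpow_zero]
  · right; rw [hk, h, zpow_one]

lemma hmem (m : Fin 3) (h : kH m) : (h : KleinFour) = 1 ∨ (h : KleinFour) = kGen m := by
  obtain ⟨k, hk⟩ := h.2
  have hk' : kGen m ^ k = (h : KleinFour) := hk
  rcases kgen_zpow m k with h' | h'
  · left; rw [← hk', h']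
  · right; rw [← hk', h']

lemma tau_sq : ∀ m : Fin 3, tau m * tau m = 1 := by
  intro m
  fin_cases m <;>
    · rw [mul_def, one_def]
      simp +decide [tau, phi, phiW, fE, u, v, w]

/-- The homomorphism from each factor to the extension `E`. -/
def rho (m : Fin 3) : kH m →* E where
  toFun h := if (h : KleinFour) = 1 then 1 else tau m
  map_one' := if_pos rfl
  map_mul' h1 h2 := by
    have hc : ((h1 * h2 : kH m) : KleinFour) = (h1 : KleinFour) * h2 := rfl
    rcases hmem m h1 with e1 | e1 <;> rcases hmem m h2 with e2 | e2 <;>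
      simp [hc, e1, e2, kgen_ne m, kgen_sq m, tau_sq m]

def Phi : G →* E := Monoid.CoprodI.lift rho

lemma Phi_gg (m : Fin 3) : Phi (gg m) = tau m := by
  rw [Phi, gg, Monoid.CoprodI.lift_of]
  simp [rho, kgen_ne m]
  intro h; exact absurd (congrArg Subtype.val h) (kgen_ne m)

/-- The set-theoretic inverse of `Phi`. -/
def psi : E → G := fun e => j e.n * sigma e.s

lemma sigma_one : sigma 1 = 1 := by simp +decide [sigma]

lemma key : ∀ g : G, ∀ e : E, psi (Phi g * e) = g * psi e := by
  intro g
  refine Monoid.CoprodI.induction_on g (by simp) ?_ ?_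
  · intro m h e
    rcases hmem m h with e1 | e1
    · have h1 : h = 1 := Subtype.ext e1
      simp [h1]
    · have h1 : h = ⟨kGen m, Subgroup.mem_zpowers _⟩ := Subtype.ext e1
      rw [h1]
      have hof : Monoid.CoprodI.of (M := fun m : Fin 3 => kH m) (i := m)
          ⟨kGen m, Subgroup.mem_zpowers _⟩ = gg m := rfl
      rw [hof, Phi_gg]
      obtain ⟨n, s⟩ := e
      show psi ⟨(tau m).n * phi (tau m).s n * fE (tau m).s s, (tau m).s * s⟩ = _
      rw [tau_s]
      show j ((tau m).n * phi (kGen m) n * fE (kGen m) s) * sigma (kGen m * s)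
          = gg m * (j n * sigma s)
      calc j ((tau m).n * phi (kGen m) n * fE (kGen m) s) * sigma (kGen m * s)
          = j (tau m).n * j (phi (kGen m) n) * (j (fE (kGen m) s) * sigma (kGen m * s)) := by
            simp [map_mul, mul_assoc]
        _ = j (tau m).n * (sigma (kGen m) * j n * (sigma (kGen m))⁻¹)
              * (sigma (kGen m) * sigma s) := by rw [K1, K2]
        _ = (j (tau m).n * sigma (kGen m)) * (j n * sigma s) := by group
        _ = gg m * (j n * sigma s) := by rw [link]
  · intro x y hx hy e
    rw [map_mul, mul_assoc, hx, hy, ← mul_assoc]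

lemma leftinv (g : G) : psi (Phi g) = g := by
  have h := key g 1
  rw [mul_one] at h
  simpa [psi, one_def, sigma_one] using h

/-- The embedding of the free group into `E`. -/
def iotaE : F3 →* E where
  toFun n := ⟨n, 1⟩
  map_one' := rfl
  map_mul' a b := by
    rw [mul_def]
    simp [phi_one, fE_one_left]

lemma Phi_j : ∀ n : F3, Phi (j n) = ⟨n, 1⟩ := by
  have h : Phi.comp j = iotaE := by
    apply FreeGroup.ext_hom
    intro i
    fin_cases i <;>
      simp +decide [j, iotaE, map_mul, Phi_gg, mul_def, tau, phi, phiW, fE, u, v, w]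
  intro n
  exact congrArg (fun f : F3 →* E => f n) h

lemma Phi_sigma : ∀ s : KleinFour, Phi (sigma s) = ⟨1, s⟩ := by
  intro s
  rcases kelim s with rfl | rfl | rfl | rfl
  · rw [sigma_one, map_one]; rfl
  · rw [show sigma (kGen 0) = gg 0 by simp [sigma], Phi_gg]; rfl
  · rw [show sigma (kGen 1) = gg 1 by simp +decide [sigma], Phi_gg]; rfl
  · rw [show sigma (kGen 2) = gg 0 * gg 1 by simp +decide [sigma], map_mul, Phi_gg, Phi_gg]
    rw [mul_def]
    simp +decide [tau, phi, phiW, fE]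

lemma rightinv (e : E) : Phi (psi e) = e := by
  obtain ⟨n, s⟩ := e
  rw [psi, map_mul, Phi_j, Phi_sigma, mul_def]
  simp [phi_one, fE_one_left]

end KleinAux

namespace KleinAux

local notation "F3" => FreeGroup (Fin 3)
local notation "G" => Monoid.CoprodI (fun m : Fin 3 => kH m)

/-- Projection of `E` to `K₄`. -/
def projE : E →* KleinFour where
  toFun e := e.s
  map_one' := rfl
  map_mul' _ _ := rfl

lemma pK4_eq : ∀ g : G, pK4 g = (Phi g).s := by
  have h : pK4 = projE.comp Phi := by
    apply Monoid.CoprodI.ext_hom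
    intro m
    refine MonoidHom.ext fun h => ?_
    show (kH m).subtype h = (projE.comp Phi) (Monoid.CoprodI.of h)
    rw [MonoidHom.comp_apply, Phi, Monoid.CoprodI.lift_of]
    rcases hmem m h with e1 | e1
    · simp only [rho, projE, MonoidHom.coe_mk, OneHom.coe_mk, Subgroup.coe_subtype, e1, if_true]
      rfl
    · simp only [rho, projE, MonoidHom.coe_mk, OneHom.coe_mk, Subgroup.coe_subtype, e1, kgen_ne m, if_false]
      exact (tau_s m).symm
  intro g
  rw [h]; rfl

lemma pK4_surj : Function.Surjective pK4 := by
  intro k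
  exact ⟨psi ⟨1, k⟩, by rw [pK4_eq, rightinv]⟩

lemma ker_eq_range : pK4.ker = j.range := by
  apply le_antisymm
  · intro g hg
    have hs : (Phi g).s = 1 := by rw [← pK4_eq]; exact hg
    refine ⟨(Phi g).n, ?_⟩
    conv_rhs => rw [← leftinv g]
    rw [psi, hs, sigma_one, mul_one]
  · rintro _ ⟨n, rfl⟩
    have : pK4 (j n) = 1 := by rw [pK4_eq, Phi_j]
    exact this

lemma j_inj : Function.Injective j := by
  intro n m h
  have := congrArg Phi h
  rw [Phi_j, Phi_j] at this
  exact congrArg E.n this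

def rElt : G := gg 0 * gg 1 * gg 2

lemma rElt_mem_ker : rElt ∈ pK4.ker := by
  have h : ∀ m : Fin 3, pK4 (gg m) = kGen m := by
    intro m; rw [pK4, gg, Monoid.CoprodI.lift_of]; rfl
  show pK4 (gg 0 * gg 1 * gg 2) = 1
  rw [map_mul, map_mul, h, h, h]
  decide

lemma ker_eq_nc : pK4.ker = Subgroup.normalClosure {rElt} := by
  have hncker : Subgroup.normalClosure {rElt} ≤ pK4.ker :=
    Subgroup.normalClosure_le_normal (by simpa using rElt_mem_ker)
  apply le_antisymm _ hncker
  rw [ker_eq_range]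
  apply FreeGroup.range_lift_le
  rintro _ ⟨i, rfl⟩
  have hr : rElt ∈ Subgroup.normalClosure {rElt} :=
    Subgroup.subset_normalClosure rfl
  have hnorm : (Subgroup.normalClosure {rElt}).Normal := Subgroup.normalClosure_normal
  fin_cases i
  · exact hr
  · -- V = r * (gg 2 * r * (gg 2)⁻¹)
    have hid : ![gg 0 * gg 1 * gg 2, gg 0 * gg 1 * gg 0 * gg 1, gg 0 * gg 2 * gg 1] 1
        = rElt * (gg 2 * rElt * (gg 2)⁻¹) := by
      simp [rElt, ginv, mul_assoc, gg_cancel, gsq]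
    show ![gg 0 * gg 1 * gg 2, gg 0 * gg 1 * gg 0 * gg 1, gg 0 * gg 2 * gg 1] 1
        ∈ (Subgroup.normalClosure {rElt} : Set _)
    rw [hid]
    exact Subgroup.mul_mem _ hr (hnorm.conj_mem _ hr _)
  · -- W = (gg 0 * r * (gg 0)⁻¹)⁻¹
    have hid : ![gg 0 * gg 1 * gg 2, gg 0 * gg 1 * gg 0 * gg 1, gg 0 * gg 2 * gg 1] 2
        = (gg 0 * rElt * (gg 0)⁻¹)⁻¹ := by
      simp [rElt, ginv, mul_inv_rev, mul_assoc, gg_cancel, gsq]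
    show ![gg 0 * gg 1 * gg 2, gg 0 * gg 1 * gg 0 * gg 1, gg 0 * gg 2 * gg 1] 2
        ∈ (Subgroup.normalClosure {rElt} : Set _)
    rw [hid]
    exact Subgroup.inv_mem _ (hnorm.conj_mem _ hr _)

noncomputable def kerEquiv : pK4.ker ≃* F3 :=
  (MulEquiv.subgroupCongr ker_eq_range).trans (MonoidHom.ofInjective j_inj).symm

end KleinAux

/-- `p : H_a ∗ H_b ∗ H_c → K₄` is surjective, its kernel is the normal closure
of the single element `ι_a(a) ι_b(b) ι_c(c)`, and the kernel is a free group of rank `3`. -/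
theorem klein_free_product_kernel :
    Function.Surjective pK4 ∧
      pK4.ker = Subgroup.normalClosure
        {Monoid.CoprodI.of (M := fun m : Fin 3 => kH m) (i := 0) ⟨kGen 0, Subgroup.mem_zpowers _⟩ *
         Monoid.CoprodI.of (M := fun m : Fin 3 => kH m) (i := 1) ⟨kGen 1, Subgroup.mem_zpowers _⟩ *
         Monoid.CoprodI.of (M := fun m : Fin 3 => kH m) (i := 2) ⟨kGen 2, Subgroup.mem_zpowers _⟩} ∧
      Nonempty (pK4.ker ≃* FreeGroup (Fin 3)) := by
  exact ⟨KleinAux.pK4_surj, KleinAux.ker_eq_nc, ⟨KleinAux.kerEquiv⟩⟩
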